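/- Let μ be a probability measure on F_m, fix 1 ≤ i ≤ m, and suppose that the singleton {a_i} is an a_i-barrier. Then F_μ(e, a_i^k) = F_μ(e, a_i)^k for every integer k ≥ 1. -/

import Mathlib

open scoped BigOperators

/-- Restricted first-passage function `F_μ(x, y; S)`: the total weight of paths from `x`
to `y` that avoid `S ∪ {y}` before arriving at `y`. -/
noncomputable def FP {G : Type*} [Group G] (μ : G → ℝ) (x y : G) (S : Set G) : ℝ :=
  ∑' k : ℕ,
    ∑' f : {f : Fin (k + 1) → G // f 0 = x ∧ f (Fin.last k) = y ∧
        ∀ j : Fin k, f j.castSucc ∉ S ∪ {y}},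
      ∏ j : Fin k, μ ((f.1 j.castSucc)⁻¹ * f.1 j.succ)

/-- `μ` is a probability measure on `G`. -/
def IsProb {G : Type*} (μ : G → ℝ) : Prop := (∀ g, 0 ≤ μ g) ∧ ∑' g, μ g = 1

/-- Word length in the free group on `Fin m` w.r.t. the generators and their inverses. -/
def wl {m : ℕ} (g : FreeGroup (Fin m)) : ℕ := g.toWord.length

/-- The shadow `C_fin(g) = {g·x : |g·x| = |g| + |x|}`. -/
def Cfin {m : ℕ} (g : FreeGroup (Fin m)) : Set (FreeGroup (Fin m)) :=
  {h | ∃ x, h = g * x ∧ wl (g * x) = wl g + wl x}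

/-- `B` is a `g`-barrier: no path from `e` can reach the shadow of `g` avoiding `B`. -/
def IsBarrier {m : ℕ} (μ : FreeGroup (Fin m) → ℝ) (g : FreeGroup (Fin m))
    (B : Set (FreeGroup (Fin m))) : Prop :=
  ∀ h ∈ Cfin g, FP μ 1 h B = 0

open scoped ENNReal

set_option linter.unusedSectionVars false

namespace Stmt16Aux

variable {G : Type*} [Group G]

/-- Weight of a list of steps. -/
noncomputable def wt (ν : G → ℝ≥0∞) (l : List G) : ℝ≥0∞ := (l.map ν).prod

@[simp] lemma wt_nil (ν : G → ℝ≥0∞) : wt ν ([] : List G) = 1 := rfl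

lemma wt_append (ν : G → ℝ≥0∞) (t r : List G) : wt ν (t ++ r) = wt ν t * wt ν r := by
  simp [wt]

lemma wt_concat (ν : G → ℝ≥0∞) (l : List G) (g : G) : wt ν (l ++ [g]) = wt ν l * ν g := by
  simp [wt]

/-- The step list `l` is an admissible first-passage path from `x` to `y` avoiding `S`. -/
def Ok (x y : G) (S : Set G) (l : List G) : Prop :=
  x * l.prod = y ∧ ∀ n < l.length, x * (l.take n).prod ∉ S ∪ {y}

/-- First-passage function, list/ENNReal version. -/
noncomputable def FPE (ν : G → ℝ≥0∞) (x y : G) (S : Set G) : ℝ≥0∞ :=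
  ∑' l : {l : List G // Ok x y S l}, wt ν l.1

lemma FPE_congr {ν : G → ℝ≥0∞} {x y x' y' : G} {S S' : Set G}
    (h : ∀ l, Ok x y S l ↔ Ok x' y' S' l) : FPE ν x y S = FPE ν x' y' S' :=
  ((Equiv.subtypeEquivRight h).tsum_eq (fun l : {l : List G // Ok x' y' S' l} => wt ν l.1))

lemma Ok_translate (g x y : G) (l : List G) : Ok (g * x) (g * y) ∅ l ↔ Ok x y ∅ l := by
  simp only [Ok, Set.empty_union, Set.mem_singleton_iff, mul_assoc, mul_right_inj]

lemma FPE_translate (ν : G → ℝ≥0∞) (g x y : G) : FPE ν (g * x) (g * y) ∅ = FPE ν x y ∅ :=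
  FPE_congr (Ok_translate g x y)


section Split

variable (ν : G → ℝ≥0∞) (x y z : G) (S : Set G)

/-- Paths that hit `z` strictly before arriving. -/
def HitsZ (l : List G) : Prop := ∃ n, n < l.length ∧ x * (l.take n).prod = z

lemma Ok_mono {S S' : Set G} (hSS : S ⊆ S') {x y : G} {l : List G} (h : Ok x y S' l) :
    Ok x y S l := by
  refine ⟨h.1, fun n hn hmem => h.2 n hn ?_⟩
  rcases hmem with hm | hm
  · exact Or.inl (hSS hm)
  · exact Or.inr hm

lemma combine_mem (hzy : z ≠ y) {t r : List G}
    (ht : Ok x z (S ∪ {y}) t) (hr : Ok z y S r) :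
    Ok x y S (t ++ r) ∧ HitsZ x z (t ++ r) := by
  have hrne : r ≠ [] := by
    intro h; apply hzy; have := hr.1; rwa [h, List.prod_nil, mul_one] at this
  have hrpos : 0 < r.length := List.length_pos_iff.2 hrne
  have hprod : x * (t ++ r).prod = y := by
    rw [List.prod_append, ← mul_assoc, ht.1]; exact hr.1
  have hpos : ∀ n < (t ++ r).length, x * ((t ++ r).take n).prod ∉ S ∪ {y} := by
    intro n hn hmem
    rcases lt_or_ge n t.length with hlt | hle
    · rw [List.take_append_of_le_length hlt.le] at hmem
      exact ht.2 n hlt (by rcases hmem with h | h; exacts [Or.inl (Or.inl h), Or.inl (Or.inr h)])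
    · obtain ⟨m, rfl⟩ := Nat.exists_eq_add_of_le hle
      rw [List.take_length_add_append, List.prod_append, ← mul_assoc, ht.1] at hmem
      have hm : m < r.length := by
        have := hn; rw [List.length_append] at this; omega
      exact hr.2 m hm hmem
  refine ⟨⟨hprod, hpos⟩, t.length, ?_, ?_⟩
  · rw [List.length_append]; omega
  · rw [List.take_append_of_le_length le_rfl, List.take_length]; exact ht.1

open Classical in
/-- Index of the first visit to `z` along the path. -/
noncomputable def splitIdx (l : List G) (h : HitsZ x z l) : ℕ :=
  Nat.find (p := fun n => n < l.length ∧ x * (l.take n).prod = z) h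

open Classical in
lemma splitIdx_spec (l : List G) (h : HitsZ x z l) :
    splitIdx x z l h < l.length ∧ x * (l.take (splitIdx x z l h)).prod = z :=
  Nat.find_spec (p := fun n => n < l.length ∧ x * (l.take n).prod = z) h

open Classical in
lemma splitIdx_min (l : List G) (h : HitsZ x z l) {m : ℕ} (hm : m < splitIdx x z l h) :
    ¬(m < l.length ∧ x * (l.take m).prod = z) :=
  Nat.find_min (p := fun n => n < l.length ∧ x * (l.take n).prod = z) h hm

lemma take_split_mem {l : List G} (hOk : Ok x y S l) (hh : HitsZ x z l) :
    Ok x z (S ∪ {y}) (l.take (splitIdx x z l hh)) := by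
  obtain ⟨hlt, hz⟩ := splitIdx_spec x z l hh
  set n := splitIdx x z l hh with hn
  constructor
  · exact hz
  · intro j hj hmem
    have hjn : j < n := by
      rw [List.length_take, lt_min_iff] at hj; exact hj.1
    have hjl : j < l.length := hjn.trans hlt
    rw [List.take_take, min_eq_left hjn.le] at hmem
    rcases hmem with hm | hm
    · exact hOk.2 j hjl hm
    · exact splitIdx_min x z l hh hjn ⟨hjl, hm⟩

lemma drop_split_mem {l : List G} (hOk : Ok x y S l) (hh : HitsZ x z l) :
    Ok z y S (l.drop (splitIdx x z l hh)) := by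
  obtain ⟨hlt, hz⟩ := splitIdx_spec x z l hh
  set n := splitIdx x z l hh with hn
  constructor
  · have h1 : x * l.prod = z * (l.drop n).prod := by
      rw [← List.prod_take_mul_prod_drop l n, ← mul_assoc, hz]
    rw [← h1]; exact hOk.1
  · intro j hj hmem
    have hjl : n + j < l.length := by
      rw [List.length_drop] at hj; omega
    have h2 : x * (l.take (n + j)).prod = z * ((l.drop n).take j).prod := by
      rw [List.take_add, List.prod_append, ← mul_assoc, hz]
    exact hOk.2 (n + j) hjl (h2 ▸ hmem)

lemma splitIdx_concat (hzy : z ≠ y) {t r : List G}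
    (ht : Ok x z (S ∪ {y}) t) (hr : Ok z y S r) (h : HitsZ x z (t ++ r)) :
    splitIdx x z (t ++ r) h = t.length := by
  classical
  rw [splitIdx]
  refine (Nat.find_eq_iff (p := fun n => n < (t ++ r).length ∧ x * ((t ++ r).take n).prod = z) h).2 ?_
  constructor
  · refine ⟨?_, ?_⟩
    · rw [List.length_append]
      have hrne : r ≠ [] := by
        intro hcon; apply hzy; have := hr.1; rwa [hcon, List.prod_nil, mul_one] at this
      have := List.length_pos_iff.2 hrne; omega
    · rw [List.take_append_of_le_length le_rfl, List.take_length]; exact ht.1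
  · intro m hm hcon
    rw [List.take_append_of_le_length hm.le] at hcon
    exact ht.2 m hm (Or.inr hcon.2) |>.elim

/-- Splitting a path at the first visit to `z`. -/
noncomputable def splitEquiv (hzy : z ≠ y) :
    ({l : List G // Ok x z (S ∪ {y}) l} × {l : List G // Ok z y S l}) ≃
      {l : List G // Ok x y S l ∧ HitsZ x z l} where
  toFun p := ⟨p.1.1 ++ p.2.1, combine_mem x y z S hzy p.1.2 p.2.2⟩
  invFun l := ⟨⟨l.1.take (splitIdx x z l.1 l.2.2), take_split_mem x y z S l.2.1 l.2.2⟩,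
               ⟨l.1.drop (splitIdx x z l.1 l.2.2), drop_split_mem x y z S l.2.1 l.2.2⟩⟩
  left_inv := by
    rintro ⟨⟨t, ht⟩, ⟨r, hr⟩⟩
    have hh : HitsZ x z (t ++ r) := (combine_mem x y z S hzy ht hr).2
    have hfind := splitIdx_concat x y z S hzy ht hr hh
    refine Prod.ext (Subtype.ext ?_) (Subtype.ext ?_)
    · show (t ++ r).take (splitIdx x z (t ++ r) _) = t
      rw [splitIdx_concat x y z S hzy ht hr]
      exact List.take_left
    · show (t ++ r).drop (splitIdx x z (t ++ r) _) = r
      rw [splitIdx_concat x y z S hzy ht hr]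
      exact List.drop_left
  right_inv := by
    rintro ⟨l, hl⟩
    exact Subtype.ext (List.take_append_drop _ l)

lemma FPE_split (hzS : z ∉ S) (hzy : z ≠ y) :
    FPE ν x y S = FPE ν x y (S ∪ {z}) + FPE ν x z (S ∪ {y}) * FPE ν z y S := by
  classical
  have hset : ∀ l, Ok x y S l ↔
      l ∈ ({l | Ok x y (S ∪ {z}) l} ∪ {l | Ok x y S l ∧ HitsZ x z l} : Set (List G)) := by
    intro l
    constructor
    · intro h
      by_cases hh : HitsZ x z l
      · exact Or.inr ⟨h, hh⟩
      · left
        refine ⟨h.1, fun n hn hmem => ?_⟩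
        rcases hmem with (hm | hm) | hm
        · exact h.2 n hn (Or.inl hm)
        · exact hh ⟨n, hn, hm⟩
        · exact h.2 n hn (Or.inr hm)
    · rintro (h | h)
      · exact Ok_mono Set.subset_union_left h
      · exact h.1
  have h1 : FPE ν x y S = ∑' l : ↥({l | Ok x y (S ∪ {z}) l} ∪ {l | Ok x y S l ∧ HitsZ x z l} :
      Set (List G)), wt ν l.1 :=
    (Equiv.subtypeEquivRight hset).tsum_eq (fun l => wt ν l.1)
  have hdisj : Disjoint ({l | Ok x y (S ∪ {z}) l} : Set (List G))
      {l | Ok x y S l ∧ HitsZ x z l} := by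
    rw [Set.disjoint_left]
    rintro l hA ⟨hB, n, hn, hz⟩
    exact hA.2 n hn (Or.inl (Or.inr hz))
  rw [h1, ENNReal.summable.tsum_union_disjoint hdisj ENNReal.summable]
  congr 1
  show (∑' (l : {l : List G // Ok x y S l ∧ HitsZ x z l}), wt ν l.1) = _
  have h2 := (splitEquiv x y z S hzy).tsum_eq
    (fun l : {l : List G // Ok x y S l ∧ HitsZ x z l} => wt ν l.1)
  rw [← h2]
  have h3 : ∀ p : ({l : List G // Ok x z (S ∪ {y}) l} × {l : List G // Ok z y S l}),
      wt ν ((splitEquiv x y z S hzy) p).1 = wt ν p.1.1 * wt ν p.2.1 := by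
    intro p; exact wt_append ν p.1.1 p.2.1
  rw [tsum_congr h3, ENNReal.tsum_prod']
  simp_rw [ENNReal.tsum_mul_left, ENNReal.tsum_mul_right]
  rfl

end Split


section Bound

variable (ν : G → ℝ≥0∞) (x y : G) (S : Set G)

/-- Paths still alive (never absorbed) after `k` steps. -/
def Alive (k : ℕ) : Set (List G) :=
  {l | l.length = k ∧ ∀ n, x * (l.take n).prod ∉ S ∪ {y}}

/-- Paths alive before the last step. -/
def Pre (k : ℕ) : Set (List G) :=
  {l | l.length = k ∧ ∀ n < l.length, x * (l.take n).prod ∉ S ∪ {y}}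

/-- Paths arriving exactly at time `k`. -/
def Arr (k : ℕ) : Set (List G) := {l | Ok x y S l ∧ l.length = k}

noncomputable def uu (k : ℕ) : ℝ≥0∞ := ∑' l : Arr x y S k, wt ν l.1
noncomputable def rr (k : ℕ) : ℝ≥0∞ := ∑' l : Alive x y S k, wt ν l.1

lemma tsum_set_mono {s t : Set (List G)} (hst : s ⊆ t) :
    ∑' l : s, wt ν l.1 ≤ ∑' l : t, wt ν l.1 := by
  rw [tsum_subtype s (wt ν), tsum_subtype t (wt ν)]
  exact ENNReal.tsum_le_tsum
    (fun l => Set.indicator_le_indicator_of_subset hst (fun _ => zero_le) l)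

lemma tsum_set_le_one_of_subsingleton {s : Set (List G)} (hs : s.Subsingleton)
    (h1 : ∀ l ∈ s, wt ν l ≤ 1) : ∑' l : s, wt ν l.1 ≤ 1 := by
  rcases s.eq_empty_or_nonempty with rfl | ⟨a, ha⟩
  · simp
  · rw [hs.eq_singleton_of_mem ha, tsum_singleton a (wt ν)]
    exact h1 a ha

/-- The length-sigma decomposition of the path space. -/
def lenSigmaEquiv : {l : List G // Ok x y S l} ≃ (Σ k : ℕ, ↥(Arr x y S k)) where
  toFun l := ⟨l.1.length, l.1, l.2, rfl⟩
  invFun p := ⟨p.2.1, p.2.2.1⟩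
  left_inv l := rfl
  right_inv p := by
    rcases p with ⟨k, l, h, hk⟩
    subst hk
    rfl

lemma FPE_eq_tsum_uu : FPE ν x y S = ∑' k, uu ν x y S k := by
  rw [FPE, (lenSigmaEquiv x y S).symm.tsum_eq (fun l : {l : List G // Ok x y S l} => wt ν l.1)
    |>.symm]
  rw [ENNReal.tsum_sigma']
  rfl

/-- Appending one step to an alive path. -/
def appEquiv (k : ℕ) : (↥(Alive x y S k) × G) ≃ ↥(Pre x y S (k + 1)) where
  toFun p := ⟨p.1.1 ++ [p.2], by
    refine ⟨by simp [p.1.2.1], fun n hn => ?_⟩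
    have hlen : n ≤ p.1.1.length := by
      simp only [List.length_append, List.length_singleton, p.1.2.1] at hn ⊢
      omega
    rw [List.take_append_of_le_length hlen]
    exact p.1.2.2 n⟩
  invFun l := (⟨l.1.take k, by
      have hlen : l.1.length = k + 1 := l.2.1
      refine ⟨by rw [List.length_take, hlen]; omega, fun n => ?_⟩
      rw [List.take_take]
      have : min n k < l.1.length := by rw [hlen]; omega
      exact l.2.2 _ this⟩,
    l.1[k]'(by rw [l.2.1]; omega))
  left_inv p := by
    rcases p with ⟨⟨l, hl⟩, g⟩
    have hlen : l.length = k := hl.1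
    refine Prod.ext (Subtype.ext ?_) ?_
    · show (l ++ [g]).take k = l
      rw [← hlen]
      exact List.take_left
    · show (l ++ [g])[k]'_ = g
      exact List.getElem_concat_length hlen.symm _
  right_inv l := by
    refine Subtype.ext ?_
    show l.1.take k ++ [l.1[k]'_] = l.1
    have hlen : l.1.length = k + 1 := l.2.1
    have hlt : k < l.1.length := by omega
    have h1 : l.1.take (k + 1) = l.1.take k ++ [l.1[k]] := by
      rw [List.take_succ, List.getElem?_eq_getElem hlt]; rfl
    rw [← h1]
    exact List.take_of_length_le (by omega)

lemma rr_eq_pre (hν : ∑' g, ν g = 1) (k : ℕ) :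
    ∑' l : Pre x y S (k + 1), wt ν l.1 = rr ν x y S k := by
  rw [← (appEquiv x y S k).tsum_eq (fun l : ↥(Pre x y S (k + 1)) => wt ν l.1)]
  have h1 : ∀ p : ↥(Alive x y S k) × G,
      wt ν ((appEquiv x y S k p) : List G) = wt ν p.1.1 * ν p.2 := by
    intro p; exact wt_concat ν p.1.1 p.2
  rw [tsum_congr h1, ENNReal.tsum_prod']
  simp_rw [ENNReal.tsum_mul_left, hν, mul_one]
  rfl

lemma step_bound (hν : ∑' g, ν g = 1) (k : ℕ) :
    uu ν x y S (k + 1) + rr ν x y S (k + 1) ≤ rr ν x y S k := by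
  have hdisj : Disjoint (Arr x y S (k + 1)) (Alive x y S (k + 1)) := by
    rw [Set.disjoint_left]
    rintro l ⟨hOk, hlen⟩ ⟨_, hAl⟩
    exact hAl l.length (by rw [List.take_length]; exact Or.inr hOk.1)
  have hsub : Arr x y S (k + 1) ∪ Alive x y S (k + 1) ⊆ Pre x y S (k + 1) := by
    rintro l (⟨hOk, hlen⟩ | ⟨hlen, hAl⟩)
    · exact ⟨hlen, hOk.2⟩
    · exact ⟨hlen, fun n _ => hAl n⟩
  calc uu ν x y S (k + 1) + rr ν x y S (k + 1)
      = ∑' l : ↥(Arr x y S (k + 1) ∪ Alive x y S (k + 1)), wt ν l.1 :=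
        (ENNReal.summable.tsum_union_disjoint hdisj ENNReal.summable).symm
    _ ≤ ∑' l : Pre x y S (k + 1), wt ν l.1 := tsum_set_mono ν hsub
    _ = rr ν x y S k := rr_eq_pre ν x y S hν k

lemma base_bound : uu ν x y S 0 + rr ν x y S 0 ≤ 1 := by
  by_cases hxy : x = y
  · have hAl : Alive x y S 0 = ∅ := by
      rw [Set.eq_empty_iff_forall_notMem]
      intro l hl
      exact hl.2 0 (by simp [hxy])
    have : rr ν x y S 0 = 0 := by rw [rr, hAl]; exact tsum_empty
    rw [this, add_zero]
    refine tsum_set_le_one_of_subsingleton ν ?_ ?_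
    · intro a ha b hb
      have ha' : a = [] := List.length_eq_zero_iff.1 ha.2
      have hb' : b = [] := List.length_eq_zero_iff.1 hb.2
      rw [ha', hb']
    · intro l hl
      rw [List.length_eq_zero_iff.1 hl.2]
      simp
  · have hArr : Arr x y S 0 = ∅ := by
      rw [Set.eq_empty_iff_forall_notMem]
      intro l hl
      have : l = [] := List.length_eq_zero_iff.1 hl.2
      rw [this] at hl
      exact hxy (by simpa using hl.1.1)
    have : uu ν x y S 0 = 0 := by rw [uu, hArr]; exact tsum_empty
    rw [this, zero_add]
    refine tsum_set_le_one_of_subsingleton ν ?_ ?_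
    · intro a ha b hb
      have ha' : a = [] := List.length_eq_zero_iff.1 ha.1
      have hb' : b = [] := List.length_eq_zero_iff.1 hb.1
      rw [ha', hb']
    · intro l hl
      rw [List.length_eq_zero_iff.1 hl.1]
      simp

lemma partial_bound (hν : ∑' g, ν g = 1) :
    ∀ N, (∑ k ∈ Finset.range (N + 1), uu ν x y S k) + rr ν x y S N ≤ 1 := by
  intro N
  induction N with
  | zero => simpa using base_bound ν x y S
  | succ N ih =>
      rw [Finset.sum_range_succ, add_assoc]
      calc (∑ k ∈ Finset.range (N + 1), uu ν x y S k) +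
            (uu ν x y S (N + 1) + rr ν x y S (N + 1))
          ≤ (∑ k ∈ Finset.range (N + 1), uu ν x y S k) + rr ν x y S N :=
            add_le_add_right (step_bound ν x y S hν N) _
        _ ≤ 1 := ih

lemma FPE_le_one (hν : ∑' g, ν g = 1) : FPE ν x y S ≤ 1 := by
  rw [FPE_eq_tsum_uu, ENNReal.tsum_eq_iSup_sum]
  refine iSup_le fun s => ?_
  obtain ⟨N, hN⟩ := s.exists_nat_subset_range
  calc ∑ k ∈ s, uu ν x y S k ≤ ∑ k ∈ Finset.range (N + 1), uu ν x y S k :=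
        Finset.sum_le_sum_of_subset (hN.trans (Finset.range_subset_range.2 (by omega)))
    _ ≤ (∑ k ∈ Finset.range (N + 1), uu ν x y S k) + rr ν x y S N := le_self_add
    _ ≤ 1 := partial_bound ν x y S hν N

end Bound


section FinList

variable (ν : G → ℝ≥0∞) (x y : G) (S : Set G) (k : ℕ)

lemma wt_eq_prod_fin (l : List G) : wt ν l = ∏ i : Fin l.length, ν l[i] := by
  conv_lhs => rw [wt, ← List.ofFn_getElem (xs := l)]
  rw [List.map_ofFn, List.prod_ofFn]
  rfl

lemma take_succ_prod (l : List G) (n : ℕ) (h : n < l.length) :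
    (l.take (n + 1)).prod = (l.take n).prod * l[n] := by
  have : l.take (n + 1) = l.take n ++ [l[n]] := by
    rw [List.take_succ, List.getElem?_eq_getElem h]; rfl
  rw [this, List.prod_append, List.prod_singleton]

lemma ofFn_pos (f : Fin (k + 1) → G) (hf0 : f 0 = x) (n : ℕ) (hn : n ≤ k) :
    x * ((List.ofFn (fun j : Fin k => (f j.castSucc)⁻¹ * f j.succ)).take n).prod
      = f ⟨n, by omega⟩ := by
  induction n with
  | zero =>
      simp only [List.take_zero, List.prod_nil, mul_one]
      exact hf0.symm
  | succ n ih =>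
      have hnk : n < k := hn
      have hlt : n < (List.ofFn (fun j : Fin k => (f j.castSucc)⁻¹ * f j.succ)).length := by
        simpa using hnk
      rw [take_succ_prod _ _ hlt, ← mul_assoc, ih (by omega), List.getElem_ofFn]
      show f _ * ((f (Fin.castSucc ⟨n, hnk⟩))⁻¹ * f (Fin.succ ⟨n, hnk⟩)) = f _
      have h1 : Fin.castSucc (⟨n, hnk⟩ : Fin k) = ⟨n, by omega⟩ := rfl
      have h2 : Fin.succ (⟨n, hnk⟩ : Fin k) = ⟨n + 1, by omega⟩ := rfl
      rw [h1, h2, mul_inv_cancel_left]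

/-- The equivalence between list-indexed paths and `Fin`-indexed paths. -/
noncomputable def finListEquiv :
    {l : List G // Ok x y S l ∧ l.length = k} ≃
      {f : Fin (k + 1) → G // f 0 = x ∧ f (Fin.last k) = y ∧
        ∀ j : Fin k, f j.castSucc ∉ S ∪ {y}} where
  toFun l := ⟨fun j => x * (l.1.take j).prod, by
    refine ⟨by simp, ?_, ?_⟩
    · show x * (l.1.take (Fin.last k)).prod = y
      have : ((Fin.last k) : ℕ) = k := rfl
      rw [this, List.take_of_length_le (le_of_eq l.2.2)]
      exact l.2.1.1
    · intro j
      show x * (l.1.take j.castSucc).prod ∉ S ∪ {y}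
      have hj : (j.castSucc : ℕ) = (j : ℕ) := rfl
      rw [hj]
      exact l.2.1.2 j (by rw [l.2.2]; exact j.isLt)⟩
  invFun f := ⟨List.ofFn (fun j : Fin k => (f.1 j.castSucc)⁻¹ * f.1 j.succ), by
    refine ⟨⟨?_, ?_⟩, by simp⟩
    · have h1 : (List.ofFn (fun j : Fin k => (f.1 j.castSucc)⁻¹ * f.1 j.succ)).take k
          = List.ofFn (fun j : Fin k => (f.1 j.castSucc)⁻¹ * f.1 j.succ) := by
        apply List.take_of_length_le; simp
      rw [← h1, ofFn_pos x k f.1 f.2.1 k le_rfl]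
      exact f.2.2.1
    · intro n hn hmem
      rw [List.length_ofFn] at hn
      rw [ofFn_pos x k f.1 f.2.1 n hn.le] at hmem
      exact f.2.2.2 ⟨n, hn⟩ hmem⟩
  left_inv l := by
    refine Subtype.ext (List.ext_getElem (by simp [l.2.2]) fun n h1 h2 => ?_)
    rw [List.getElem_ofFn]
    show (x * (l.1.take (⟨n, _⟩ : Fin k).castSucc).prod)⁻¹ *
      (x * (l.1.take (⟨n, _⟩ : Fin k).succ).prod) = l.1[n]
    have hc : ((⟨n, by simpa using h1⟩ : Fin k).castSucc : ℕ) = n := rfl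
    have hs : ((⟨n, by simpa using h1⟩ : Fin k).succ : ℕ) = n + 1 := rfl
    rw [hc, hs, take_succ_prod _ _ h2, ← mul_assoc]
    group
  right_inv f := by
    refine Subtype.ext (funext fun j => ?_)
    show x * ((List.ofFn (fun i : Fin k => (f.1 i.castSucc)⁻¹ * f.1 i.succ)).take
      (j : ℕ)).prod = f.1 j
    rw [ofFn_pos x k f.1 f.2.1 (j : ℕ) (by omega)]
  
lemma inner_eq :
    ∑' f : {f : Fin (k + 1) → G // f 0 = x ∧ f (Fin.last k) = y ∧
        ∀ j : Fin k, f j.castSucc ∉ S ∪ {y}},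
      ∏ j : Fin k, ν ((f.1 j.castSucc)⁻¹ * f.1 j.succ) = uu ν x y S k := by
  rw [← (finListEquiv x y S k).tsum_eq (fun f : {f : Fin (k + 1) → G // f 0 = x ∧
      f (Fin.last k) = y ∧ ∀ j : Fin k, f j.castSucc ∉ S ∪ {y}} =>
      ∏ j : Fin k, ν ((f.1 j.castSucc)⁻¹ * f.1 j.succ))]
  refine tsum_congr fun l => ?_
  have hstep : ∀ j : Fin k,
      ((((finListEquiv x y S k) l).1 j.castSucc)⁻¹ * ((finListEquiv x y S k) l).1 j.succ)
        = l.1[(j : ℕ)]'(by rw [l.2.2]; exact j.isLt) := by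
    intro j
    show (x * (l.1.take j.castSucc).prod)⁻¹ * (x * (l.1.take j.succ).prod) = _
    have hc : ((j.castSucc : Fin (k+1)) : ℕ) = (j : ℕ) := rfl
    have hs : ((j.succ : Fin (k+1)) : ℕ) = (j : ℕ) + 1 := rfl
    rw [hc, hs, take_succ_prod _ _ (by rw [l.2.2]; exact j.isLt), ← mul_assoc]
    group
  rw [Finset.prod_congr rfl (fun j _ => congrArg ν (hstep j))]
  rw [wt_eq_prod_fin]
  exact (Fintype.prod_equiv (finCongr l.2.2) _ _ (fun i => rfl)).symm

end FinList


section Convert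

variable (μ : G → ℝ)

lemma uu_ne_top {ν : G → ℝ≥0∞} (hν : ∑' g, ν g = 1) (x y : G) (S : Set G) (k : ℕ) :
    uu ν x y S k ≠ ⊤ := by
  have h1 : uu ν x y S k ≤ FPE ν x y S := by
    rw [FPE_eq_tsum_uu]; exact ENNReal.le_tsum k
  exact ((h1.trans (FPE_le_one ν x y S hν)).trans_lt (by norm_num)).ne

lemma FP_eq (hpos : ∀ g, 0 ≤ μ g)
    (hν : ∑' g, ENNReal.ofReal (μ g) = 1) (x y : G) (S : Set G) :
    FP μ x y S = (FPE (fun g => ENNReal.ofReal (μ g)) x y S).toReal := by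
  set ν : G → ℝ≥0∞ := fun g => ENNReal.ofReal (μ g) with hνdef
  have hinner : ∀ k : ℕ, (∑' f : {f : Fin (k + 1) → G // f 0 = x ∧ f (Fin.last k) = y ∧
      ∀ j : Fin k, f j.castSucc ∉ S ∪ {y}},
        ∏ j : Fin k, μ ((f.1 j.castSucc)⁻¹ * f.1 j.succ)) = (uu ν x y S k).toReal := by
    intro k
    rw [← inner_eq ν x y S k, ENNReal.tsum_toReal_eq (fun f => ?_)]
    · refine tsum_congr fun f => ?_
      rw [← ENNReal.ofReal_prod_of_nonneg (fun j _ => hpos _), ENNReal.toReal_ofReal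
        (Finset.prod_nonneg (fun j _ => hpos _))]
    · exact (ENNReal.prod_lt_top (fun j _ => ENNReal.ofReal_lt_top)).ne
  rw [FP, tsum_congr hinner, ← ENNReal.tsum_toReal_eq (uu_ne_top hν x y S),
    ← FPE_eq_tsum_uu]

end Convert

end Stmt16Aux

namespace Stmt16Aux

variable {m : ℕ} (i : Fin m)

lemma pow_of_eq_mk (k : ℕ) :
    (FreeGroup.of i) ^ k = FreeGroup.mk (List.replicate k (i, true)) := by
  induction k with
  | zero => rfl
  | succ k ih =>
      rw [pow_succ, ih, FreeGroup.of, FreeGroup.mul_mk, ← List.replicate_succ']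

lemma toWord_pow_of (k : ℕ) :
    ((FreeGroup.of i) ^ k).toWord = List.replicate k (i, true) := by
  rw [pow_of_eq_mk, FreeGroup.toWord_mk, FreeGroup.reduce_replicate]

lemma wl_pow_of (k : ℕ) : wl ((FreeGroup.of i) ^ k) = k := by
  rw [wl, toWord_pow_of, List.length_replicate]

lemma pow_mem_Cfin (k : ℕ) (hk : 1 ≤ k) :
    (FreeGroup.of i) ^ k ∈ Cfin (FreeGroup.of i) := by
  refine ⟨(FreeGroup.of i) ^ (k - 1), ?_, ?_⟩
  · rw [← pow_succ']
    congr 1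
    omega
  · have h1 : FreeGroup.of i * (FreeGroup.of i) ^ (k - 1) = (FreeGroup.of i) ^ k := by
      rw [← pow_succ']; congr 1; omega
    rw [h1, wl_pow_of]
    have h2 : wl (FreeGroup.of i) = 1 := by
      have := wl_pow_of i 1
      rwa [pow_one] at this
    rw [h2, wl_pow_of]
    omega

lemma of_ne_pow (k : ℕ) (hk : 2 ≤ k) : FreeGroup.of i ≠ (FreeGroup.of i) ^ k := by
  intro h
  have h1 := congrArg wl h
  rw [wl_pow_of] at h1
  have h2 : wl (FreeGroup.of i) = 1 := by
    have := wl_pow_of i 1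
    rwa [pow_one] at this
  rw [h2] at h1
  omega

end Stmt16Aux


open Stmt16Aux

/-- if the singleton `{a_i}` is an `a_i`-barrier, then the first-passage
function is multiplicative along powers of `a_i`. -/
theorem stmt16 {m : ℕ} (μ : FreeGroup (Fin m) → ℝ) (hμ : IsProb μ) (i : Fin m)
    (hbar : IsBarrier μ (FreeGroup.of i) {FreeGroup.of i})
    (k : ℕ) (hk : 1 ≤ k) :
    FP μ 1 (FreeGroup.of i ^ k) ∅ = (FP μ 1 (FreeGroup.of i) ∅) ^ k := by
  classical
  set a := FreeGroup.of i with ha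
  set ν : FreeGroup (Fin m) → ℝ≥0∞ := fun g => ENNReal.ofReal (μ g) with hν
  have hsum : Summable μ := by
    by_contra hs
    have := hμ.2
    rw [tsum_eq_zero_of_not_summable hs] at this
    norm_num at this
  have hν1 : ∑' g, ν g = 1 := by
    rw [← ENNReal.ofReal_tsum_of_nonneg hμ.1 hsum, hμ.2, ENNReal.ofReal_one]
  have hFP : ∀ (x y : FreeGroup (Fin m)) (S : Set (FreeGroup (Fin m))),
      FP μ x y S = (FPE ν x y S).toReal := fun x y S => FP_eq μ hμ.1 hν1 x y S
  have hbarE : ∀ j : ℕ, 1 ≤ j → FPE ν 1 (a ^ j) {a} = 0 := by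
    intro j hj
    have h0 : FP μ 1 (a ^ j) {a} = 0 := hbar _ (pow_mem_Cfin i j hj)
    rw [hFP] at h0
    have hne : FPE ν 1 (a ^ j) {a} ≠ ⊤ :=
      ((FPE_le_one ν 1 (a ^ j) {a} hν1).trans_lt (by norm_num)).ne
    exact ((ENNReal.toReal_eq_zero_iff _).1 h0).resolve_right hne
  have key : ∀ j : ℕ, 1 ≤ j → FPE ν 1 (a ^ j) ∅ = (FPE ν 1 a ∅) ^ j := by
    intro j hj
    induction j, hj using Nat.le_induction with
    | base => simp
    | succ j hj1 ih =>
        have hane : a ≠ a ^ (j + 1) := of_ne_pow i (j + 1) (by omega)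
        have hs1 := FPE_split ν 1 (a ^ (j + 1)) a ∅ (Set.notMem_empty a) hane
        have hs2 := FPE_split ν 1 a (a ^ (j + 1)) ∅ (Set.notMem_empty _) (Ne.symm hane)
        simp only [Set.empty_union] at hs1 hs2
        rw [hbarE (j + 1) (by omega)] at hs1 hs2
        rw [zero_add] at hs1
        rw [zero_mul, add_zero] at hs2
        have htr : FPE ν a (a ^ (j + 1)) ∅ = FPE ν 1 (a ^ j) ∅ := by
          have h3 := FPE_translate ν a 1 (a ^ j)
          rw [mul_one, ← pow_succ'] at h3
          exact h3
        rw [htr, ← hs2, ih] at hs1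
        rw [hs1, ← pow_succ']
  rw [hFP, hFP, key k hk, ENNReal.toReal_pow]
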